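/- Let active be a finite set of coins, hc a finite set of address–coin pairs, C_a = {c : (a,c) ∈ hc}, with V_≤ = |M_Least| and V_≥ = |M_Inact| + |M_Pairs| − |M_Most| (error sets as in the coin encoding). Suppose V_≤ = 0 or V_≥ = 0. Then Σ_a |C_a| = |active| if and only if V_≤ = 0 and V_≥ = 0, which holds if and only if the invariants hold: every owned coin is active, every active coin is owned, and no coin is owned by two distinct addresses. -/

import Mathlib

theorem stmt6 {Address Coin : Type*} [DecidableEq Address] [DecidableEq Coin]
    (active : Finset Coin) (hc : Finset (Address × Coin))
    (C : Address → Finset Coin) (hC : ∀ a c, c ∈ C a ↔ (a, c) ∈ hc)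
    (MInact MLeast MMost : Finset Coin) (MPairs : Finset (Address × Coin))
    (hInact : ∀ c, c ∈ MInact ↔ (c ∉ active ∧ ∃ a, c ∈ C a))
    (hLeast : ∀ c, c ∈ MLeast ↔ (c ∈ active ∧ ∀ a, c ∉ C a))
    (hMost : ∀ c, c ∈ MMost ↔ ∃ a b, a ≠ b ∧ c ∈ C a ∧ c ∈ C b)
    (hPairs : ∀ a c, (a, c) ∈ MPairs ↔ (c ∈ C a ∧ ∃ b, b ≠ a ∧ c ∈ C b))
    (hOne : MLeast.card = 0 ∨ (MInact.card : ℤ) + MPairs.card - MMost.card = 0) :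
    ((∑ a ∈ hc.image Prod.fst, (C a).card = active.card) ↔
      (MLeast.card = 0 ∧ (MInact.card : ℤ) + MPairs.card - MMost.card = 0)) ∧
    ((MLeast.card = 0 ∧ (MInact.card : ℤ) + MPairs.card - MMost.card = 0) ↔
      ((∀ a c, c ∈ C a → c ∈ active) ∧ (∀ c ∈ active, ∃ a, c ∈ C a) ∧
        (∀ a b c, c ∈ C a → c ∈ C b → a = b))) := by
  classical
  set owned := hc.image Prod.snd with howned
  set n : Coin → ℕ := fun c => (hc.filter (fun p => p.2 = c)).card with hn
  have howned_mem : ∀ c, c ∈ owned ↔ ∃ a, c ∈ C a := by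
    intro c
    simp only [howned, Finset.mem_image]
    constructor
    · rintro ⟨⟨a, c'⟩, hp, rfl⟩; exact ⟨a, (hC a _).2 hp⟩
    · rintro ⟨a, ha⟩; exact ⟨(a, c), (hC a c).1 ha, rfl⟩
  -- A : sum over addresses = hc.card
  have hA : ∑ a ∈ hc.image Prod.fst, (C a).card = hc.card := by
    rw [Finset.card_eq_sum_card_fiberwise
      (fun p hp => Finset.mem_image_of_mem Prod.fst hp)]
    apply Finset.sum_congr rfl
    intro a _
    have : hc.filter (fun p => p.1 = a) = (C a).image (fun c => (a, c)) := by
      ext ⟨x, y⟩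
      simp only [Finset.mem_filter, Finset.mem_image, hC]
      constructor
      · rintro ⟨h1, rfl⟩; exact ⟨y, h1, rfl⟩
      · rintro ⟨c, hcmem, heq⟩
        cases heq
        exact ⟨hcmem, rfl⟩
    rw [this, Finset.card_image_of_injective _ (fun c d h => congrArg Prod.snd h)]
  -- B : hc.card = sum of fibers over coins
  have hB : hc.card = ∑ c ∈ owned, n c :=
    Finset.card_eq_sum_card_fiberwise (fun p hp => Finset.mem_image_of_mem Prod.snd hp)
  have hMsub : MMost ⊆ owned := by
    intro c hcm
    obtain ⟨a, b, _, ha, _⟩ := (hMost c).1 hcm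
    exact (howned_mem c).2 ⟨a, ha⟩
  -- C : split the sum
  have hCsplit : ∑ c ∈ owned \ MMost, n c + ∑ c ∈ MMost, n c = ∑ c ∈ owned, n c :=
    Finset.sum_sdiff hMsub
  -- D : on owned \ MMost, n c = 1
  have hD : ∑ c ∈ owned \ MMost, n c = (owned \ MMost).card := by
    rw [Finset.card_eq_sum_ones]
    apply Finset.sum_congr rfl
    intro c hcmem
    obtain ⟨hco, hcn⟩ := Finset.mem_sdiff.1 hcmem
    have hle : n c ≤ 1 := by
      apply Finset.card_le_one.2
      rintro ⟨a, x⟩ hax ⟨b, y⟩ hby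
      simp only [Finset.mem_filter] at hax hby
      obtain ⟨hax1, hax2⟩ := hax
      obtain ⟨hby1, hby2⟩ := hby
      by_cases hab : a = b
      · subst hab
        rw [Prod.mk.injEq]
        exact ⟨rfl, hax2.trans hby2.symm⟩
      · rw [hax2] at hax1
        rw [hby2] at hby1
        exact absurd ((hMost c).2 ⟨a, b, hab, (hC a c).2 hax1, (hC b c).2 hby1⟩) hcn
    have hge : 1 ≤ n c := by
      obtain ⟨a, ha⟩ := (howned_mem c).1 hco
      apply Finset.card_pos.2
      exact ⟨(a, c), Finset.mem_filter.2 ⟨(hC a c).1 ha, rfl⟩⟩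
    omega
  -- E : MPairs.card = sum of n over MMost
  have hMPfil : MPairs = hc.filter (fun p => p.2 ∈ MMost) := by
    ext ⟨a, c⟩
    simp only [Finset.mem_filter, hPairs, hMost]
    constructor
    · rintro ⟨ha, b, hba, hb⟩
      exact ⟨(hC a c).1 ha, b, a, hba, hb, ha⟩
    · rintro ⟨hmem, x, y, hxy, hx, hy⟩
      refine ⟨(hC a c).2 hmem, ?_⟩
      by_cases hxa : x = a
      · exact ⟨y, fun h => hxy (hxa.trans h.symm), hy⟩
      · exact ⟨x, hxa, hx⟩
  have hE : MPairs.card = ∑ c ∈ MMost, n c := by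
    rw [hMPfil]
    rw [Finset.card_eq_sum_card_fiberwise
      (f := Prod.snd) (s := hc.filter (fun p => p.2 ∈ MMost)) (t := MMost) (fun p hp => (Finset.mem_filter.1 hp).2)]
    apply Finset.sum_congr rfl
    intro c hcm
    congr 1
    ext p
    simp only [Finset.mem_filter]
    constructor
    · rintro ⟨⟨h1, _⟩, h3⟩; exact ⟨h1, h3⟩
    · rintro ⟨h1, rfl⟩; exact ⟨⟨h1, hcm⟩, rfl⟩
  -- F : card of sdiff
  have hF : (owned \ MMost).card + MMost.card = owned.card :=
    Finset.card_sdiff_add_card_eq_card hMsub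
  -- G : owned.card + MLeast.card = active.card + MInact.card
  have hG : owned.card + MLeast.card = active.card + MInact.card := by
    rw [← Finset.card_union_of_disjoint, ← Finset.card_union_of_disjoint]
    · congr 1
      ext c
      simp only [Finset.mem_union, howned_mem, hLeast, hInact]
      by_cases hca : c ∈ active <;> by_cases hcw : ∃ a, c ∈ C a
      · tauto
      · push_neg at hcw; tauto
      · tauto
      · push_neg at hcw; tauto
    · rw [Finset.disjoint_right]
      intro c hcm
      exact fun hca => ((hInact c).1 hcm).1 hca
    · rw [Finset.disjoint_right]
      intro c hcm hco
      obtain ⟨a, ha⟩ := (howned_mem c).1 hco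
      exact ((hLeast c).1 hcm).2 a ha
  -- H : 2 * MMost.card ≤ MPairs.card
  have hH : 2 * MMost.card ≤ MPairs.card := by
    rw [hE]
    have hle : ∑ _c ∈ MMost, 2 ≤ ∑ c ∈ MMost, n c := by
      apply Finset.sum_le_sum
      intro c hcm
      obtain ⟨a, b, hab, ha, hb⟩ := (hMost c).1 hcm
      apply Finset.one_lt_card.2
      refine ⟨(a, c), Finset.mem_filter.2 ⟨(hC a c).1 ha, rfl⟩,
        (b, c), Finset.mem_filter.2 ⟨(hC b c).1 hb, rfl⟩, ?_⟩
      simp [hab]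
    simpa [Finset.sum_const, mul_comm] using hle
  -- key equation
  have hkey : ∑ a ∈ hc.image Prod.fst, (C a).card + MLeast.card + MMost.card =
      active.card + MInact.card + MPairs.card := by
    omega
  have hkeyZ : (∑ a ∈ hc.image Prod.fst, (C a).card : ℤ) + MLeast.card + MMost.card =
      active.card + MInact.card + MPairs.card := by exact_mod_cast hkey
  constructor
  · constructor
    · intro hSum
      have hS : (∑ a ∈ hc.image Prod.fst, (C a).card : ℤ) = active.card := by
        exact_mod_cast hSum
      rcases hOne with h | h
      · exact ⟨h, by omega⟩
      · exact ⟨by omega, h⟩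
    · rintro ⟨h1, h2⟩
      have : (∑ a ∈ hc.image Prod.fst, (C a).card : ℤ) = active.card := by omega
      exact_mod_cast this
  · constructor
    · rintro ⟨h1, h2⟩
      have hMostZ : MMost.card = 0 := by omega
      have hInactZ : MInact.card = 0 := by omega
      have hLeastE : MLeast = ∅ := Finset.card_eq_zero.1 h1
      have hMostE : MMost = ∅ := Finset.card_eq_zero.1 hMostZ
      have hInactE : MInact = ∅ := Finset.card_eq_zero.1 hInactZ
      refine ⟨?_, ?_, ?_⟩
      · intro a c hca
        by_contra hcna
        have : c ∈ MInact := (hInact c).2 ⟨hcna, a, hca⟩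
        simp [hInactE] at this
      · intro c hca
        by_contra hno
        push_neg at hno
        have : c ∈ MLeast := (hLeast c).2 ⟨hca, hno⟩
        simp [hLeastE] at this
      · intro a b c hca hcb
        by_contra hab
        have : c ∈ MMost := (hMost c).2 ⟨a, b, hab, hca, hcb⟩
        simp [hMostE] at this
    · rintro ⟨h1, h2, h3⟩
      have hLE : MLeast = ∅ := by
        ext c; simp only [Finset.notMem_empty, iff_false, hLeast]
        rintro ⟨hca, hno⟩
        obtain ⟨a, ha⟩ := h2 c hca
        exact hno a ha
      have hIE : MInact = ∅ := by
        ext c; simp only [Finset.notMem_empty, iff_false, hInact]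
        rintro ⟨hcna, a, ha⟩
        exact hcna (h1 a c ha)
      have hME : MMost = ∅ := by
        ext c; simp only [Finset.notMem_empty, iff_false, hMost]
        rintro ⟨a, b, hab, ha, hb⟩
        exact hab (h3 a b c ha hb)
      have hPE : MPairs = ∅ := by
        ext ⟨a, c⟩; simp only [Finset.notMem_empty, iff_false, hPairs]
        rintro ⟨ha, b, hba, hb⟩
        exact hba (h3 b a c hb ha)
      simp [hLE, hIE, hME, hPE]
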